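/- arXiv:1406.4897 — 2 statements merged into one kernel-verified Lean document; each statement's English description precedes it below -/
import Mathlib

section
/- Let G be a group, H ◁ G of finite index with G/H abelian. An endomorphism φ of the forgetful functor on a category C of representations of G (stable under character twists) commutes with all H-intertwiners if and only if φ(χπ) = φ(π) for every π ∈ C and every character χ of G/H. -/
noncomputable section

open scoped TensorProduct DirectSum

universe u

section Defs

variable {G : Type u} [Group G]

/-- The submodule of equivariant linear maps between two representations. -/
def equivHom {M : Type*} [Monoid M] {V₁ V₂ : Type*}
    [AddCommGroup V₁] [Module ℂ V₁] [AddCommGroup V₂] [Module ℂ V₂]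
    (ρ₁ : Representation ℂ M V₁) (ρ₂ : Representation ℂ M V₂) :
    Submodule ℂ (V₁ →ₗ[ℂ] V₂) where
  carrier := {f | ∀ (m : M) (v : V₁), f (ρ₁ m v) = ρ₂ m (f v)}
  add_mem' := by intro a b ha hb m v; simp_all
  zero_mem' := by intro m v; simp
  smul_mem' := by intro c f hf m v; simp_all

instance equivHom.instAddCommGroup {M : Type*} [Monoid M] {V₁ V₂ : Type*}
    [AddCommGroup V₁] [Module ℂ V₁] [AddCommGroup V₂] [Module ℂ V₂]
    (ρ₁ : Representation ℂ M V₁) (ρ₂ : Representation ℂ M V₂) :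
    AddCommGroup ↥(equivHom ρ₁ ρ₂) :=
  Submodule.addCommGroup _

instance equivHom.instModule {M : Type*} [Monoid M] {V₁ V₂ : Type*}
    [AddCommGroup V₁] [Module ℂ V₁] [AddCommGroup V₂] [Module ℂ V₂]
    (ρ₁ : Representation ℂ M V₁) (ρ₂ : Representation ℂ M V₂) :
    Module ℂ ↥(equivHom ρ₁ ρ₂) :=
  Submodule.module _

/-- Twist of a representation by a `ℂˣ`-valued character. -/
def twist {V : Type*} [AddCommGroup V] [Module ℂ V]
    (ρ : Representation ℂ G V) (χ : G →* ℂˣ) : Representation ℂ G V where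
  toFun g := (χ g : ℂ) • ρ g
  map_one' := by simp
  map_mul' g₁ g₂ := by
    ext v
    simp [Module.End.mul_apply, LinearMap.smul_apply, map_mul, smul_smul,
      map_smul, mul_comm, mul_left_comm]

@[simp] lemma twist_apply {V : Type*} [AddCommGroup V] [Module ℂ V]
    (ρ : Representation ℂ G V) (χ : G →* ℂˣ) (g : G) (v : V) :
    twist ρ χ g v = (χ g : ℂ) • ρ g v := rfl

/-- Characters of `G` trivial on `H`, i.e. characters of `G/H`. -/
def TrivOn (H : Subgroup G) : Type u := {χ : G →* ℂˣ // ∀ h ∈ H, χ h = 1}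

/-- Irreducibility of a representation. -/
def IsIrreducibleRep {M : Type*} [Monoid M] {V : Type*} [AddCommGroup V] [Module ℂ V]
    (ρ : Representation ℂ M V) : Prop :=
  (∃ v : V, v ≠ 0) ∧
    ∀ W : Submodule ℂ V, (∀ (m : M) (v : V), v ∈ W → ρ m v ∈ W) → W = ⊥ ∨ W = ⊤

/-- Equivalence (isomorphism) of representations. -/
def RepEquiv {M : Type*} [Monoid M] {V₁ V₂ : Type*}
    [AddCommGroup V₁] [Module ℂ V₁] [AddCommGroup V₂] [Module ℂ V₂]
    (ρ₁ : Representation ℂ M V₁) (ρ₂ : Representation ℂ M V₂) : Prop :=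
  ∃ e : V₁ ≃ₗ[ℂ] V₂, ∀ (m : M) (v : V₁), e (ρ₁ m v) = ρ₂ m (e v)

/-- Restriction of a representation of `G` to a subgroup `H`. -/
def resR (H : Subgroup G) {V : Type*} [AddCommGroup V] [Module ℂ V]
    (ρ : Representation ℂ G V) : Representation ℂ H V := ρ.comp H.subtype

@[simp] lemma resR_apply (H : Subgroup G) {V : Type*} [AddCommGroup V] [Module ℂ V]
    (ρ : Representation ℂ G V) (h : H) : resR H ρ h = ρ ↑h := rfl

end Defs
section Ind

variable {G : Type u} [Group G] (H : Subgroup G)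
variable {V : Type u} [AddCommGroup V] [Module ℂ V]

/-- The space of the induced representation: functions `w : G → V` with
`w (h * g) = ρ h (w g)` for `h ∈ H`. -/
def IndSpace (ρ : Representation ℂ H V) : Submodule ℂ (G → V) where
  carrier := {w | ∀ (h : H) (g : G), w (↑h * g) = ρ h (w g)}
  add_mem' := by intro a b ha hb h g; simp_all
  zero_mem' := by intro h g; simp
  smul_mem' := by intro c a ha h g; simp_all

/-- The induced representation `Ind_H^G ρ`, acting by right translation. -/
def indRep (ρ : Representation ℂ H V) : Representation ℂ G ↥(IndSpace H ρ) where
  toFun g :=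
    { toFun := fun w => ⟨fun x => (w : G → V) (x * g), by
        intro h x
        have := w.2 h (x * g)
        simpa [mul_assoc] using this⟩
      map_add' := by intro a b; apply Subtype.ext; funext x; simp
      map_smul' := by intro c a; apply Subtype.ext; funext x; simp }
  map_one' := by
    apply LinearMap.ext; intro w; apply Subtype.ext; funext x; simp
  map_mul' := by
    intro g₁ g₂
    apply LinearMap.ext; intro w; apply Subtype.ext; funext x
    simp [Module.End.mul_apply, mul_assoc]

@[simp] lemma indRep_apply (ρ : Representation ℂ H V) (g : G) (w : ↥(IndSpace H ρ)) (x : G) :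
    ((indRep H ρ g w : ↥(IndSpace H ρ)) : G → V) x = (w : G → V) (x * g) := rfl

/-- Evaluation at `g` of functions in the induced representation. -/
def evalAt (ρ : Representation ℂ H V) (g : G) : ↥(IndSpace H ρ) →ₗ[ℂ] V where
  toFun w := (w : G → V) g
  map_add' := by intro a b; simp
  map_smul' := by intro c a; simp

@[simp] lemma evalAt_apply (ρ : Representation ℂ H V) (g : G) (w : ↥(IndSpace H ρ)) :
    evalAt H ρ g w = (w : G → V) g := rfl

/-- Extension by zero: the section `e_g^*` of `evalAt`, supported on the coset `H g`. -/
def extAt [DecidablePred (· ∈ H)] (ρ : Representation ℂ H V) (g : G) :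
    V →ₗ[ℂ] ↥(IndSpace H ρ) where
  toFun v := ⟨fun x => if hx : x * g⁻¹ ∈ H then ρ ⟨x * g⁻¹, hx⟩ v else 0, by
    intro h x
    dsimp only
    by_cases hx : x * g⁻¹ ∈ H
    · have hx' : (↑h * x) * g⁻¹ ∈ H := by
        have e : (↑h * x) * g⁻¹ = ↑h * (x * g⁻¹) := by group
        rw [e]; exact H.mul_mem h.2 hx
      rw [dif_pos hx', dif_pos hx]
      have e2 : (⟨(↑h * x) * g⁻¹, hx'⟩ : H) = h * ⟨x * g⁻¹, hx⟩ := by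
        apply Subtype.ext; simp [mul_assoc]
      rw [e2, map_mul]
      rfl
    · have hx' : ¬ ((↑h * x) * g⁻¹ ∈ H) := by
        intro hc
        apply hx
        have e : x * g⁻¹ = (↑h)⁻¹ * ((↑h * x) * g⁻¹) := by group
        rw [e]; exact H.mul_mem (H.inv_mem h.2) hc
      rw [dif_neg hx', dif_neg hx, map_zero]⟩
  map_add' := by
    intro a b; apply Subtype.ext; funext x
    by_cases hx : x * g⁻¹ ∈ H <;> simp [hx]
  map_smul' := by
    intro c a; apply Subtype.ext; funext x
    by_cases hx : x * g⁻¹ ∈ H <;> simp [hx]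

/-- The projector `p_g = e_g^* ∘ e_g` onto functions supported on `H g`. -/
def projAt [DecidablePred (· ∈ H)] (ρ : Representation ℂ H V) (g : G) :
    ↥(IndSpace H ρ) →ₗ[ℂ] ↥(IndSpace H ρ) :=
  extAt H ρ g ∘ₗ evalAt H ρ g

/-- Functoriality of induction on `H`-equivariant maps. -/
def indMap {V₁ V₂ : Type u} [AddCommGroup V₁] [Module ℂ V₁] [AddCommGroup V₂] [Module ℂ V₂]
    (ρ₁ : Representation ℂ H V₁) (ρ₂ : Representation ℂ H V₂)
    (α : V₁ →ₗ[ℂ] V₂) (hα : ∀ (h : H) (v : V₁), α (ρ₁ h v) = ρ₂ h (α v)) :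
    ↥(IndSpace H ρ₁) →ₗ[ℂ] ↥(IndSpace H ρ₂) where
  toFun w := ⟨fun x => α ((w : G → V₁) x), by
    intro h x
    dsimp only
    rw [w.2 h x, hα]⟩
  map_add' := by intro a b; apply Subtype.ext; funext x; simp
  map_smul' := by intro c a; apply Subtype.ext; funext x; simp

/-- Conjugate representation `π^g`, given by `h ↦ π (g⁻¹ h g)`. -/
def conjRep [hN : H.Normal] (ρ : Representation ℂ H V) (g : G) : Representation ℂ H V :=
  ρ.comp
    { toFun := fun h => ⟨g⁻¹ * ↑h * g, by simpa using hN.conj_mem ↑h h.2 g⁻¹⟩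
      map_one' := by apply Subtype.ext; simp
      map_mul' := by
        intro a b; apply Subtype.ext
        show g⁻¹ * ↑(a * b) * g = (g⁻¹ * ↑a * g) * (g⁻¹ * ↑b * g)
        rw [Subgroup.coe_mul]; group }

@[simp] lemma conjRep_apply [H.Normal] (ρ : Representation ℂ H V) (g : G) (h : H) (v : V) :
    conjRep H ρ g h v = ρ ⟨g⁻¹ * ↑h * g, by simpa using ‹H.Normal›.conj_mem ↑h h.2 g⁻¹⟩ v := rfl

attribute [irreducible] indRep

end Ind
section Bundled

/-- A bundled (complex, linear) representation of a group `M`. -/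
structure RepOn (M : Type u) [Group M] : Type (u + 1) where
  V : Type u
  [acg : AddCommGroup V]
  [mod : Module ℂ V]
  ρ : Representation ℂ M V

attribute [instance] RepOn.acg RepOn.mod

variable {G : Type u} [Group G]

/-- The bundled induced representation. -/
def indRepOn (H : Subgroup G) (σ : RepOn ↥H) : RepOn G :=
  { V := ↥(IndSpace H σ.ρ), ρ := indRep H σ.ρ }

/-- The bundled restriction to a subgroup. -/
def resRepOn (H : Subgroup G) (P : RepOn G) : RepOn ↥H :=
  { V := P.V, ρ := resR H P.ρ }

/-- The bundled twist by a character trivial on `H`. -/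
def twistRepOn {H : Subgroup G} (P : RepOn G) (χ : TrivOn H) : RepOn G :=
  { V := P.V, ρ := twist P.ρ χ.1 }

/-- A family of endomorphisms (one for each bundled representation) commuting with all
intertwiners between members of `C`: an endomorphism of the forgetful functor on `C`. -/
def Commutes {M : Type u} [Group M] (C : Set (RepOn M))
    (φ : ∀ π : RepOn M, π.V →ₗ[ℂ] π.V) : Prop :=
  ∀ π₁ ∈ C, ∀ π₂ ∈ C, ∀ α : π₁.V →ₗ[ℂ] π₂.V,
    (∀ m : M, α ∘ₗ π₁.ρ m = π₂.ρ m ∘ₗ α) → α ∘ₗ φ π₁ = φ π₂ ∘ₗ α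

/-- Commutation with all `H`-intertwiners between members of `C` (support in `H`). -/
def HCommutes (H : Subgroup G) (C : Set (RepOn G))
    (φ : ∀ π : RepOn G, π.V →ₗ[ℂ] π.V) : Prop :=
  ∀ π₁ ∈ C, ∀ π₂ ∈ C, ∀ α : π₁.V →ₗ[ℂ] π₂.V,
    (∀ h : H, α ∘ₗ π₁.ρ ↑h = π₂.ρ ↑h ∘ₗ α) → α ∘ₗ φ π₁ = φ π₂ ∘ₗ α

/-- The direct sum of a family of bundled representations. -/
def dsumRepOn {M : Type u} [Group M] {ι : Type u} [DecidableEq ι] (f : ι → RepOn M) :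
    RepOn M where
  V := ⨁ i, (f i).V
  ρ :=
    { toFun := fun m => DFinsupp.mapRange.linearMap (fun i => (f i).ρ m)
      map_one' := by
        have : (fun i => (f i).ρ (1 : M)) = fun i => (LinearMap.id : (f i).V →ₗ[ℂ] (f i).V) := by
          funext i; rw [map_one]; rfl
        rw [this, DFinsupp.mapRange.linearMap_id]
        rfl
      map_mul' := by
        intro m₁ m₂
        have : (fun i => (f i).ρ (m₁ * m₂)) =
            fun i => ((f i).ρ m₁) ∘ₗ ((f i).ρ m₂) := by
          funext i; rw [map_mul]; rfl
        rw [this, DFinsupp.mapRange.linearMap_comp]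
        rfl }

/-- Closure of a class of representations under subobjects, quotients and direct sums. -/
def ClosedRep {M : Type u} [Group M] (C : Set (RepOn M)) : Prop :=
  (∀ P ∈ C, ∀ σ : RepOn M, (∃ f : σ.V →ₗ[ℂ] P.V, Function.Injective f ∧
      ∀ (m : M) (v : σ.V), f (σ.ρ m v) = P.ρ m (f v)) → σ ∈ C) ∧
  (∀ P ∈ C, ∀ σ : RepOn M, (∃ f : P.V →ₗ[ℂ] σ.V, Function.Surjective f ∧
      ∀ (m : M) (v : P.V), f (P.ρ m v) = σ.ρ m (f v)) → σ ∈ C) ∧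
  (∀ (ι : Type u) (_ : DecidableEq ι) (f : ι → RepOn M),
      (∀ i, f i ∈ C) → dsumRepOn f ∈ C)

/-- The Fourier transform of a finitely supported function at a representation. -/
def fourierT {M : Type u} [Group M] (f : M →₀ ℂ) {V : Type*} [AddCommGroup V] [Module ℂ V]
    (ρ : Representation ℂ M V) : V →ₗ[ℂ] V :=
  f.sum fun g c => c • (ρ g : V →ₗ[ℂ] V)

end Bundled


section Aux

open Finset

private lemma aux_sum_char_eq_zero {A : Type*} [CommGroup A] [Finite A] [Fintype (A →* ℂˣ)]
    {a : A} (ha : a ≠ 1) : ∑ χ : A →* ℂˣ, ((χ a : ℂˣ) : ℂ) = 0 := by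
  haveI : NeZero ((Monoid.exponent A : ℂ)) :=
    ⟨by exact_mod_cast Monoid.exponent_ne_zero_of_finite⟩
  obtain ⟨χ₀, hχ₀⟩ := CommGroup.exists_apply_ne_one_of_hasEnoughRootsOfUnity A ℂ ha
  have h1 : ∑ χ : A →* ℂˣ, (((χ₀ * χ) a : ℂˣ) : ℂ) = ∑ χ : A →* ℂˣ, ((χ a : ℂˣ) : ℂ) :=
    Fintype.sum_bijective (χ₀ * ·) (Group.mulLeft_bijective χ₀) _ _ (fun χ => rfl)
  have h2 : ((χ₀ a : ℂˣ) : ℂ) * ∑ χ : A →* ℂˣ, ((χ a : ℂˣ) : ℂ)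
      = ∑ χ : A →* ℂˣ, ((χ a : ℂˣ) : ℂ) := by
    rw [Finset.mul_sum, ← h1]
    exact Finset.sum_congr rfl fun χ _ => by simp [Units.val_mul]
  have hne : ((χ₀ a : ℂˣ) : ℂ) ≠ 1 := fun h => hχ₀ (Units.ext h)
  by_contra hS
  exact hne (mul_right_cancel₀ hS (h2.trans (one_mul _).symm))

private lemma aux_sum_comp {R : Type*} [CommSemiring R] {M N P : Type*}
    [AddCommMonoid M] [AddCommMonoid N] [AddCommMonoid P]
    [Module R M] [Module R N] [Module R P]
    {ι : Type*} (s : Finset ι) (f : ι → (N →ₗ[R] P)) (g : M →ₗ[R] N) :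
    (∑ i ∈ s, f i) ∘ₗ g = ∑ i ∈ s, (f i ∘ₗ g) := by
  ext v
  simp [LinearMap.sum_apply]

private lemma aux_comp_sum {R : Type*} [CommSemiring R] {M N P : Type*}
    [AddCommMonoid M] [AddCommMonoid N] [AddCommMonoid P]
    [Module R M] [Module R N] [Module R P]
    {ι : Type*} (s : Finset ι) (f : ι → (M →ₗ[R] N)) (g : N →ₗ[R] P) :
    g ∘ₗ (∑ i ∈ s, f i) = ∑ i ∈ s, (g ∘ₗ f i) := by
  ext v
  simp [LinearMap.sum_apply, map_sum]

end Aux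

/-- Let `H ◁ G` be of finite index with `G/H` abelian and `C` a class of
representations of `G` stable under twisting by characters of `G/H`.  An endomorphism `φ`
of the forgetful functor on `C` commutes with all `H`-intertwiners between members of `C`
if and only if `φ (χ π) = φ (π)` for every `π ∈ C` and every character `χ` of `G/H`. -/
theorem statement11 {G : Type u} [Group G] (H : Subgroup G) [H.Normal] [Finite (G ⧸ H)]
    (hab : ∀ a b : G ⧸ H, a * b = b * a)
    (C : Set (RepOn G))
    (htwist : ∀ P ∈ C, ∀ χ : TrivOn H, twistRepOn P χ ∈ C)
    (φ : ∀ P : RepOn G, P.V →ₗ[ℂ] P.V) (hφ : Commutes C φ) :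
    HCommutes H C φ ↔ ∀ P ∈ C, ∀ χ : TrivOn H, φ (twistRepOn P χ) = φ P := by
  classical
  constructor
  · -- forward direction: use the identity as an `H`-intertwiner `P → χP`.
    intro hH P hP χ
    have h := hH P hP (twistRepOn P χ) (htwist P hP χ) LinearMap.id ?_
    · exact h.symm
    · intro h
      ext v
      have h1 : χ.1 ↑h = 1 := χ.2 ↑h h.2
      show P.ρ ↑h v = twist P.ρ χ.1 ↑h v
      rw [twist_apply, h1]
      simp
  · -- converse
    intro hT π₁ h₁ π₂ h₂ α hα
    letI : CommGroup (G ⧸ H) := { (inferInstance : Group (G ⧸ H)) with mul_comm := hab }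
    haveI : NeZero ((Monoid.exponent (G ⧸ H) : ℂ)) :=
      ⟨by exact_mod_cast Monoid.exponent_ne_zero_of_finite⟩
    obtain ⟨e⟩ := CommGroup.monoidHom_mulEquiv_of_hasEnoughRootsOfUnity (G ⧸ H) ℂ
    haveI : Finite ((G ⧸ H) →* ℂˣ) := Finite.of_equiv _ e.symm.toEquiv
    haveI : Fintype ((G ⧸ H) →* ℂˣ) := Fintype.ofFinite _
    haveI : Fintype (G ⧸ H) := Fintype.ofFinite _
    have hα' : ∀ (h : H) (v : π₁.V), α (π₁.ρ ↑h v) = π₂.ρ ↑h (α v) :=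
      fun h v => LinearMap.ext_iff.mp (hα h) v
    set T : G → (π₁.V →ₗ[ℂ] π₂.V) := fun g => π₂.ρ g ∘ₗ α ∘ₗ π₁.ρ g⁻¹ with hTdef
    have hcancel : ∀ (P : RepOn G) (g : G) (v : P.V), P.ρ g (P.ρ g⁻¹ v) = v := by
      intro P g v
      rw [← Module.End.mul_apply, ← map_mul, mul_inv_cancel, map_one, Module.End.one_apply]
    have hcancel' : ∀ (P : RepOn G) (g : G) (v : P.V), P.ρ g⁻¹ (P.ρ g v) = v := by
      intro P g v
      have := hcancel P g⁻¹ v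
      rwa [inv_inv] at this
    have hTH : ∀ g, g ∈ H → T g = α := by
      intro g hg
      ext v
      have h' := hα' ⟨g, hg⟩ (π₁.ρ g⁻¹ v)
      simp only [hTdef, LinearMap.comp_apply]
      rw [← h', hcancel]
    have hTmul : ∀ g x : G, T (g * x) = π₂.ρ g ∘ₗ T x ∘ₗ π₁.ρ g⁻¹ := by
      intro g x
      ext v
      simp only [hTdef, LinearMap.comp_apply, mul_inv_rev, map_mul, Module.End.mul_apply]
    have hTcoset : ∀ g x : G, (QuotientGroup.mk g : G ⧸ H) = QuotientGroup.mk x → T g = T x := by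
      intro g x h
      have hh : g⁻¹ * x ∈ H := QuotientGroup.eq.mp h
      have hx : x = g * (g⁻¹ * x) := by group
      rw [hx, hTmul, hTH _ hh]
    have hcompT : ∀ g x : G, π₂.ρ g ∘ₗ T x = T (g * x) ∘ₗ π₁.ρ g := by
      intro g x
      rw [hTmul]
      ext v
      simp only [LinearMap.comp_apply]
      rw [hcancel']
    -- the lift of a character of `G ⧸ H` to `G`
    have hlift_triv : ∀ (χq : (G ⧸ H) →* ℂˣ) (h : G), h ∈ H →
        (χq.comp (QuotientGroup.mk' H)) h = 1 := by
      intro χq h hh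
      have : (QuotientGroup.mk h : G ⧸ H) = 1 := (QuotientGroup.eq_one_iff h).mpr hh
      simp [QuotientGroup.mk'_apply, this]
    -- coset invariance of the summands
    have hFcoset : ∀ (χ : G →* ℂˣ), (∀ h ∈ H, χ h = 1) → ∀ g x : G,
        (QuotientGroup.mk g : G ⧸ H) = QuotientGroup.mk x →
        (((χ g)⁻¹ : ℂˣ) : ℂ) • T g = (((χ x)⁻¹ : ℂˣ) : ℂ) • T x := by
      intro χ hχ g x h
      have hh : g⁻¹ * x ∈ H := QuotientGroup.eq.mp h
      have hx : x = g * (g⁻¹ * x) := by group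
      have hχx : χ x = χ g := by rw [hx, map_mul, hχ _ hh, mul_one]
      rw [hTcoset g x h, hχx]
    -- reindexing the sum over cosets
    have hreindex : ∀ (χ : G →* ℂˣ), (∀ h ∈ H, χ h = 1) → ∀ g : G,
        ∑ a : G ⧸ H, (((χ (g * a.out))⁻¹ : ℂˣ) : ℂ) • T (g * a.out)
          = ∑ a : G ⧸ H, (((χ a.out)⁻¹ : ℂˣ) : ℂ) • T a.out := by
      intro χ hχ g
      refine Fintype.sum_equiv (Equiv.mulLeft (QuotientGroup.mk g : G ⧸ H))
        _ _ fun a => ?_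
      refine hFcoset χ hχ _ _ ?_
      show (QuotientGroup.mk (g * a.out) : G ⧸ H)
          = QuotientGroup.mk ((QuotientGroup.mk g * a : G ⧸ H).out)
      rw [QuotientGroup.out_eq', QuotientGroup.mk_mul, QuotientGroup.out_eq']
    -- Claim A: equivariance of the χ-component
    have claimA : ∀ (χ : G →* ℂˣ), (∀ h ∈ H, χ h = 1) → ∀ g : G,
        (∑ a : G ⧸ H, (((χ a.out)⁻¹ : ℂˣ) : ℂ) • T a.out) ∘ₗ (((χ g : ℂˣ) : ℂ) • π₁.ρ g)
          = π₂.ρ g ∘ₗ (∑ a : G ⧸ H, (((χ a.out)⁻¹ : ℂˣ) : ℂ) • T a.out) := by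
      intro χ hχ g
      have hterm : ∀ a : G ⧸ H,
          π₂.ρ g ∘ₗ ((((χ a.out)⁻¹ : ℂˣ) : ℂ) • T a.out)
            = ((χ g : ℂˣ) : ℂ) •
              (((((χ (g * a.out))⁻¹ : ℂˣ) : ℂ) • T (g * a.out)) ∘ₗ π₁.ρ g) := by
        intro a
        rw [LinearMap.comp_smul, hcompT, LinearMap.smul_comp, smul_smul]
        congr 1
        rw [← Units.val_mul]
        congr 1
        rw [map_mul, mul_inv, mul_inv_cancel_left]
      rw [aux_comp_sum, Finset.sum_congr rfl (fun a _ => hterm a), ← Finset.smul_sum,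
        ← aux_sum_comp, hreindex χ hχ g, LinearMap.comp_smul]
    -- Claim B: summing over all characters recovers α
    have claimB : ∑ χq : (G ⧸ H) →* ℂˣ,
        (∑ a : G ⧸ H, ((((χq.comp (QuotientGroup.mk' H)) a.out)⁻¹ : ℂˣ) : ℂ) • T a.out)
          = (Fintype.card ((G ⧸ H) →* ℂˣ) : ℂ) • α := by
      rw [Finset.sum_comm]
      have hco : ∀ a : G ⧸ H,
          ∑ χq : (G ⧸ H) →* ℂˣ, ((((χq.comp (QuotientGroup.mk' H)) a.out)⁻¹ : ℂˣ) : ℂ)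
            = if a = 1 then (Fintype.card ((G ⧸ H) →* ℂˣ) : ℂ) else 0 := by
        intro a
        have hval : ∀ χq : (G ⧸ H) →* ℂˣ,
            (((χq.comp (QuotientGroup.mk' H)) a.out)⁻¹ : ℂˣ) = χq a⁻¹ := by
          intro χq
          rw [MonoidHom.comp_apply, QuotientGroup.mk'_apply, QuotientGroup.out_eq', map_inv]
        simp only [hval]
        by_cases ha : a = 1
        · subst ha
          simp
        · rw [if_neg ha]
          exact aux_sum_char_eq_zero (by simpa using ha)
      calc ∑ a : G ⧸ H, ∑ χq : (G ⧸ H) →* ℂˣ,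
              ((((χq.comp (QuotientGroup.mk' H)) a.out)⁻¹ : ℂˣ) : ℂ) • T a.out
          = ∑ a : G ⧸ H,
              (if a = 1 then (Fintype.card ((G ⧸ H) →* ℂˣ) : ℂ) else 0) • T a.out := by
            refine Finset.sum_congr rfl fun a _ => ?_
            rw [← Finset.sum_smul, hco a]
        _ = (Fintype.card ((G ⧸ H) →* ℂˣ) : ℂ) • T (1 : G ⧸ H).out := by
            rw [Fintype.sum_eq_single (1 : G ⧸ H)]
            · simp
            · intro b hb
              simp [hb]
        _ = (Fintype.card ((G ⧸ H) →* ℂˣ) : ℂ) • α := by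
            rw [hTH _ ((QuotientGroup.eq_one_iff _).mp (QuotientGroup.out_eq' (1 : G ⧸ H)))]
    -- each χ-component commutes with φ
    have key : ∀ χq : (G ⧸ H) →* ℂˣ,
        (∑ a : G ⧸ H, ((((χq.comp (QuotientGroup.mk' H)) a.out)⁻¹ : ℂˣ) : ℂ) • T a.out) ∘ₗ φ π₁
          = φ π₂ ∘ₗ
            (∑ a : G ⧸ H, ((((χq.comp (QuotientGroup.mk' H)) a.out)⁻¹ : ℂˣ) : ℂ) • T a.out) := by
      intro χq
      set χT : TrivOn H := ⟨χq.comp (QuotientGroup.mk' H), hlift_triv χq⟩ with hχT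
      have hc := hφ (twistRepOn π₁ χT) (htwist π₁ h₁ χT) π₂ h₂
        (∑ a : G ⧸ H, ((((χq.comp (QuotientGroup.mk' H)) a.out)⁻¹ : ℂˣ) : ℂ) • T a.out) ?_
      · rw [hT π₁ h₁ χT] at hc
        exact hc
      · intro g
        have hA := claimA (χq.comp (QuotientGroup.mk' H)) (hlift_triv χq) g
        have hrw : (twistRepOn π₁ χT).ρ g
            = (((χq.comp (QuotientGroup.mk' H)) g : ℂˣ) : ℂ) • π₁.ρ g := rfl
        rw [hrw]
        exact hA
    -- assemble
    have hsum : (∑ χq : (G ⧸ H) →* ℂˣ,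
        (∑ a : G ⧸ H, ((((χq.comp (QuotientGroup.mk' H)) a.out)⁻¹ : ℂˣ) : ℂ) • T a.out)) ∘ₗ φ π₁
          = φ π₂ ∘ₗ (∑ χq : (G ⧸ H) →* ℂˣ,
            (∑ a : G ⧸ H, ((((χq.comp (QuotientGroup.mk' H)) a.out)⁻¹ : ℂˣ) : ℂ) • T a.out)) := by
      rw [aux_sum_comp, aux_comp_sum]
      exact Finset.sum_congr rfl fun χq _ => key χq
    rw [claimB, LinearMap.smul_comp, LinearMap.comp_smul] at hsum
    have hN : ((Fintype.card ((G ⧸ H) →* ℂˣ)) : ℂ) ≠ 0 :=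
      Nat.cast_ne_zero.mpr Fintype.card_ne_zero
    exact smul_right_injective _ hN hsum
end
end

section
/- Let G be a locally profinite group with Haar measure, H ◁ G open of finite index, and f a smooth compactly supported function on G. Then the Fourier transform f̂ (given on a representation π by π(f) = ∫_G f(g)π(g)dg) commutes with all H-intertwiners between representations in C if and only if f̂ = (f·1_H)^, where 1_H is the indicator function of H. Consequently, if the Fourier transform is injective on C, f̂ is supported in H (in the intertwining sense) iff f is supported in H. -/
noncomputable section

open scoped TensorProduct DirectSum

universe u

section AuxStatement12

variable {G : Type u} [Group G]

lemma fourierT_eq_sum {V : Type*} [AddCommGroup V] [Module ℂ V]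
    (f : G →₀ ℂ) (ρ : Representation ℂ G V) :
    fourierT f ρ = ∑ g ∈ f.support, f g • (ρ g : V →ₗ[ℂ] V) := rfl

lemma fourierT_filter {V : Type*} [AddCommGroup V] [Module ℂ V]
    (f : G →₀ ℂ) (ρ : Representation ℂ G V) (p : G → Prop) [DecidablePred p] :
    fourierT (f.filter p) ρ
      = ∑ g ∈ f.support, (if p g then f g else 0) • (ρ g : V →ₗ[ℂ] V) := by
  classical
  rw [fourierT_eq_sum, Finsupp.support_filter, Finset.sum_filter]
  refine Finset.sum_congr rfl fun g _ => ?_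
  by_cases hp : p g <;> simp [Finsupp.filter_apply, hp]

lemma fourierT_twist {V : Type*} [AddCommGroup V] [Module ℂ V]
    (f : G →₀ ℂ) (ρ : Representation ℂ G V) (χ : G →* ℂˣ) :
    fourierT f (twist ρ χ)
      = ∑ g ∈ f.support, ((χ g : ℂ) * f g) • (ρ g : V →ₗ[ℂ] V) := by
  rw [fourierT_eq_sum]
  refine Finset.sum_congr rfl fun g _ => ?_
  ext v
  simp [twist_apply, smul_smul, mul_comm]

lemma hcomm_of_supp {H : Subgroup G} (f0 : G →₀ ℂ) (hsupp : ∀ g ∈ f0.support, g ∈ H)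
    {V₁ V₂ : Type*} [AddCommGroup V₁] [Module ℂ V₁] [AddCommGroup V₂] [Module ℂ V₂]
    (ρ₁ : Representation ℂ G V₁) (ρ₂ : Representation ℂ G V₂)
    (α : V₁ →ₗ[ℂ] V₂) (hα : ∀ h : H, α ∘ₗ ρ₁ ↑h = ρ₂ ↑h ∘ₗ α) :
    α ∘ₗ fourierT f0 ρ₁ = fourierT f0 ρ₂ ∘ₗ α := by
  ext v
  simp only [LinearMap.comp_apply, fourierT_eq_sum, LinearMap.sum_apply,
    LinearMap.smul_apply, map_sum, map_smul]
  refine Finset.sum_congr rfl fun g hg => ?_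
  have h1 := congrArg (fun L : V₁ →ₗ[ℂ] V₂ => L v) (hα ⟨g, hsupp g hg⟩)
  simp only [LinearMap.comp_apply] at h1
  rw [h1]

lemma sum_char_eq_zero {A : Type u} [CommGroup A] [Fintype (A →* ℂˣ)]
    {a : A} (hsep : ∃ ψ₀ : A →* ℂˣ, ψ₀ a ≠ 1) :
    ∑ ψ : A →* ℂˣ, (ψ a : ℂ) = 0 := by
  obtain ⟨ψ₀, h0⟩ := hsep
  have key : (ψ₀ a : ℂ) * ∑ ψ : A →* ℂˣ, (ψ a : ℂ) = ∑ ψ : A →* ℂˣ, (ψ a : ℂ) := by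
    rw [Finset.mul_sum]
    exact Fintype.sum_bijective (ψ₀ * ·) (Group.mulLeft_bijective ψ₀) _ _
      (fun ψ => by simp)
  have h1 : ((ψ₀ a : ℂ) - 1) * ∑ ψ : A →* ℂˣ, (ψ a : ℂ) = 0 := by
    rw [sub_mul, one_mul, key, sub_self]
  rcases mul_eq_zero.mp h1 with h | h
  · exact absurd (Units.ext (by simpa using sub_eq_zero.mp h)) h0
  · exact h

end AuxStatement12

/-- Let `H ◁ G` be open of finite index with `G/H` abelian, and `C` a
class of representations containing all irreducibles and stable under twists by characters
of `G/H`.  (We model the smooth compactly supported functions on `G`, for a discrete—hence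
locally profinite—group `G` with counting Haar measure, as the finitely supported functions
`f : G →₀ ℂ`, so that `f̂(π) = π(f) = ∑_g f(g) π(g)`.)  Then `f̂` commutes with all
`H`-intertwiners between members of `C` if and only if `f̂ = (f·1_H)^`.  Consequently, if
the Fourier transform is injective on `C`, then `f̂` is supported in `H` (in the
intertwining sense) if and only if `f` is supported in `H`. -/
theorem statement12 {G : Type u} [Group G] (H : Subgroup G) [H.Normal] [Finite (G ⧸ H)]
    [DecidablePred (· ∈ H)]
    (hab : ∀ a b : G ⧸ H, a * b = b * a)
    (C : Set (RepOn G))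
    (hirr : ∀ P : RepOn G, IsIrreducibleRep P.ρ → P ∈ C)
    (htwist : ∀ P ∈ C, ∀ χ : TrivOn H, twistRepOn P χ ∈ C)
    (f : G →₀ ℂ) :
    (HCommutes H C (fun P => fourierT f P.ρ) ↔
      ∀ P ∈ C, fourierT f P.ρ = fourierT (f.filter (· ∈ H)) P.ρ) ∧
    ((∀ f₁ f₂ : G →₀ ℂ, (∀ P ∈ C, fourierT f₁ P.ρ = fourierT f₂ P.ρ) → f₁ = f₂) →
      (HCommutes H C (fun P => fourierT f P.ρ) ↔ ∀ g : G, g ∉ H → f g = 0)) := by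
  classical
  letI : CommGroup (G ⧸ H) :=
    { (inferInstance : Group (G ⧸ H)) with mul_comm := hab }
  haveI : NeZero ((Monoid.exponent (G ⧸ H) : ℂ)) :=
    ⟨Nat.cast_ne_zero.mpr Monoid.exponent_ne_zero_of_finite⟩
  haveI : Finite ((G ⧸ H) →* ℂˣ) := by
    obtain ⟨e⟩ := CommGroup.monoidHom_mulEquiv_of_hasEnoughRootsOfUnity (G ⧸ H) ℂ
    exact Finite.of_equiv _ e.toEquiv.symm
  letI : Fintype ((G ⧸ H) →* ℂˣ) := Fintype.ofFinite _
  haveI : Nonempty ((G ⧸ H) →* ℂˣ) := ⟨1⟩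
  have hN0 : ((Fintype.card ((G ⧸ H) →* ℂˣ) : ℂ)) ≠ 0 :=
    Nat.cast_ne_zero.mpr Fintype.card_ne_zero
  have main : HCommutes H C (fun P => fourierT f P.ρ) ↔
      ∀ P ∈ C, fourierT f P.ρ = fourierT (f.filter (· ∈ H)) P.ρ := by
    constructor
    · intro hcom P hP
      have hstep : ∀ ψ : (G ⧸ H) →* ℂˣ,
          fourierT f P.ρ = fourierT f (twist P.ρ (ψ.comp (QuotientGroup.mk' H))) := by
        intro ψ
        have hχ : ∀ h ∈ H, (ψ.comp (QuotientGroup.mk' H)) h = 1 := by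
          intro h hh
          have h1 : ((h : G) : G ⧸ H) = 1 := (QuotientGroup.eq_one_iff h).mpr hh
          simp [MonoidHom.comp_apply, h1]
        have h2 := hcom P hP (twistRepOn P ⟨ψ.comp (QuotientGroup.mk' H), hχ⟩)
          (htwist P hP _) LinearMap.id (fun h => by
            ext v
            have h1 : ((ψ ((h : G) : G ⧸ H)) : ℂ) = 1 := by
              rw [(QuotientGroup.eq_one_iff (h : G)).mpr h.2, map_one, Units.val_one]
            show P.ρ (h : G) v = (((ψ.comp (QuotientGroup.mk' H)) (h : G) : ℂˣ) : ℂ) • P.ρ (h : G) v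
            rw [MonoidHom.comp_apply, QuotientGroup.mk'_apply, h1, one_smul])
        simp only [LinearMap.id_comp, LinearMap.comp_id] at h2
        exact h2
      have hA : ∑ ψ : (G ⧸ H) →* ℂˣ,
          fourierT f (twist P.ρ (ψ.comp (QuotientGroup.mk' H)))
          = ((Fintype.card ((G ⧸ H) →* ℂˣ) : ℂ)) • fourierT f P.ρ := by
        rw [Finset.sum_congr rfl fun ψ _ => (hstep ψ).symm, Finset.sum_const,
          Finset.card_univ, ← Nat.cast_smul_eq_nsmul ℂ]
      have hB : ∑ ψ : (G ⧸ H) →* ℂˣ,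
          fourierT f (twist P.ρ (ψ.comp (QuotientGroup.mk' H)))
          = ((Fintype.card ((G ⧸ H) →* ℂˣ) : ℂ)) • fourierT (f.filter (· ∈ H)) P.ρ := by
        rw [fourierT_filter, Finset.smul_sum]
        calc ∑ ψ : (G ⧸ H) →* ℂˣ,
              fourierT f (twist P.ρ (ψ.comp (QuotientGroup.mk' H)))
            = ∑ ψ : (G ⧸ H) →* ℂˣ, ∑ g ∈ f.support,
                ((ψ ((g : G) : G ⧸ H) : ℂ) * f g) • (P.ρ g : P.V →ₗ[ℂ] P.V) :=
              Finset.sum_congr rfl fun ψ _ => fourierT_twist f P.ρ _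
          _ = ∑ g ∈ f.support, ∑ ψ : (G ⧸ H) →* ℂˣ,
                ((ψ ((g : G) : G ⧸ H) : ℂ) * f g) • (P.ρ g : P.V →ₗ[ℂ] P.V) :=
              Finset.sum_comm
          _ = ∑ g ∈ f.support, ((Fintype.card ((G ⧸ H) →* ℂˣ) : ℂ)) •
                ((if g ∈ H then f g else 0) • (P.ρ g : P.V →ₗ[ℂ] P.V)) := by
              refine Finset.sum_congr rfl fun g _ => ?_
              by_cases hg : g ∈ H
              · have h1 : ∀ ψ : (G ⧸ H) →* ℂˣ, ((ψ ((g : G) : G ⧸ H)) : ℂ) = 1 := fun ψ => by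
                  rw [(QuotientGroup.eq_one_iff g).mpr hg, map_one, Units.val_one]
                simp only [h1, one_mul, if_pos hg, Finset.sum_const, Finset.card_univ]
                rw [← Nat.cast_smul_eq_nsmul ℂ]
              · have hne : ((g : G) : G ⧸ H) ≠ 1 :=
                  fun hc => hg ((QuotientGroup.eq_one_iff g).mp hc)
                have h0 : ∑ ψ : (G ⧸ H) →* ℂˣ, ((ψ ((g : G) : G ⧸ H)) : ℂ) = 0 :=
                  sum_char_eq_zero
                    (CommGroup.exists_apply_ne_one_of_hasEnoughRootsOfUnity (G ⧸ H) ℂ hne)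
                rw [if_neg hg, zero_smul, smul_zero]
                calc ∑ ψ : (G ⧸ H) →* ℂˣ,
                      ((ψ ((g : G) : G ⧸ H) : ℂ) * f g) • (P.ρ g : P.V →ₗ[ℂ] P.V)
                    = (∑ ψ : (G ⧸ H) →* ℂˣ, ((ψ ((g : G) : G ⧸ H)) : ℂ)) •
                        (f g • (P.ρ g : P.V →ₗ[ℂ] P.V)) := by
                      rw [Finset.sum_smul]
                      exact Finset.sum_congr rfl fun ψ _ => mul_smul _ _ _
                  _ = 0 := by rw [h0, zero_smul]
      have hAB := congrArg (fun L => ((Fintype.card ((G ⧸ H) →* ℂˣ) : ℂ))⁻¹ • L)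
        (hA.symm.trans hB)
      simpa [smul_smul, inv_mul_cancel₀ hN0] using hAB
    · intro heq π₁ h₁ π₂ h₂ α hα
      show α ∘ₗ fourierT f π₁.ρ = fourierT f π₂.ρ ∘ₗ α
      rw [heq π₁ h₁, heq π₂ h₂]
      exact hcomm_of_supp (f.filter (· ∈ H))
        (fun g hg => by
          rw [Finsupp.support_filter] at hg
          exact (Finset.mem_filter.mp hg).2) _ _ α hα
  refine ⟨main, fun hinj => main.trans ⟨fun h g hg => ?_, fun h P hP => ?_⟩⟩
  · have hf := hinj f (f.filter (· ∈ H)) h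
    have h2 := congrArg (fun F : G →₀ ℂ => F g) hf
    simpa [Finsupp.filter_apply, hg] using h2
  · have hfe : f.filter (· ∈ H) = f := by
      ext g
      by_cases hg : g ∈ H
      · simp [Finsupp.filter_apply, hg]
      · simp [Finsupp.filter_apply, hg, h g hg]
    rw [hfe]
end
end
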